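/- Let F, G ∈ ℝ^{m×m} with P F Q = diag(I_p, H), P G Q = diag(J, I_q) (P, Q invertible, H nilpotent with H^{q*} = 0). Write Q = [Q_p Q_q] by columns and P = [P₁; P₂] by rows. Then a sequence Y : ℕ → ℝ^m satisfies F Y_{k+1} = G Y_k + V_k for all k ≥ 0 if and only if there exists a sequence y : ℕ → ℝ^p and a sequence z : ℕ → ℝ^q with Y_k = Q_p y_k + Q_q z_k, y_{k+1} = J y_k + P₁ V_k, and H z_{k+1} = z_k + P₂ V_k for all k. -/

import Mathlib

open Matrix

theorem stmt13 {p q : ℕ}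
    (F G P Q : Matrix (Fin (p + q)) (Fin (p + q)) ℝ)
    (hP : IsUnit P) (hQ : IsUnit Q)
    (J : Matrix (Fin p) (Fin p) ℝ) (H : Matrix (Fin q) (Fin q) ℝ)
    (hH : IsNilpotent H)
    (hF : P * F * Q = (Matrix.fromBlocks 1 0 0 H).submatrix finSumFinEquiv.symm finSumFinEquiv.symm)
    (hG : P * G * Q = (Matrix.fromBlocks J 0 0 1).submatrix finSumFinEquiv.symm finSumFinEquiv.symm)
    (Qp : Matrix (Fin (p + q)) (Fin p) ℝ) (hQp : Qp = Q.submatrix id (Fin.castAdd q))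
    (Qq : Matrix (Fin (p + q)) (Fin q) ℝ) (hQq : Qq = Q.submatrix id (Fin.natAdd p))
    (P₁ : Matrix (Fin p) (Fin (p + q)) ℝ) (hP₁ : P₁ = P.submatrix (Fin.castAdd q) id)
    (P₂ : Matrix (Fin q) (Fin (p + q)) ℝ) (hP₂ : P₂ = P.submatrix (Fin.natAdd p) id)
    (V : ℕ → Fin (p + q) → ℝ) (Y : ℕ → Fin (p + q) → ℝ) :
    (∀ k, F.mulVec (Y (k + 1)) = G.mulVec (Y k) + V k) ↔
    (∃ (y : ℕ → Fin p → ℝ) (z : ℕ → Fin q → ℝ),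
      (∀ k, Y k = Qp.mulVec (y k) + Qq.mulVec (z k)) ∧
      (∀ k, y (k + 1) = J.mulVec (y k) + P₁.mulVec (V k)) ∧
      (∀ k, H.mulVec (z (k + 1)) = z k + P₂.mulVec (V k))) := by
  set e := (finSumFinEquiv : Fin p ⊕ Fin q ≃ Fin (p + q)) with he
  have hQd : IsUnit Q.det := (Matrix.isUnit_iff_isUnit_det Q).mp hQ
  have hPd : IsUnit P.det := (Matrix.isUnit_iff_isUnit_det P).mp hP
  have hQQi : Q * Q⁻¹ = 1 := Matrix.mul_nonsing_inv Q hQd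
  have hQiQ : Q⁻¹ * Q = 1 := Matrix.nonsing_inv_mul Q hQd
  have hPiP : P⁻¹ * P = 1 := Matrix.nonsing_inv_mul P hPd
  -- Lemma A: column-split
  have colA : ∀ (a : Fin p → ℝ) (b : Fin q → ℝ),
      Qp.mulVec a + Qq.mulVec b = Q.mulVec (Sum.elim a b ∘ e.symm) := by
    intro a b
    have h1 : (Q.submatrix id e).mulVec (Sum.elim a b)
        = (Q.mulVec (Sum.elim a b ∘ e.symm)) ∘ id :=
      Matrix.submatrix_mulVec_equiv Q (Sum.elim a b) id e
    have h2 : Q.submatrix id e = Matrix.fromCols Qp Qq := by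
      ext i j
      cases j with
      | inl j => simp [hQp, he]
      | inr j => simp [hQq, he]
    rw [h2, Matrix.fromCols_mulVec_sumElim] at h1
    simpa using h1
  -- Lemma B: row-split of P
  have rowB : ∀ (v : Fin (p + q) → ℝ),
      (P.mulVec v) ∘ e = Sum.elim (P₁.mulVec v) (P₂.mulVec v) := by
    intro v
    have h1 : (P.submatrix e (Equiv.refl _)).mulVec v
        = (P.mulVec (v ∘ (Equiv.refl _).symm)) ∘ e :=
      Matrix.submatrix_mulVec_equiv P v e (Equiv.refl _)
    have h2 : P.submatrix e (Equiv.refl _) = Matrix.fromRows P₁ P₂ := by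
      ext i j
      cases i with
      | inl i => simp [hP₁, he]
      | inr i => simp [hP₂, he]
    rw [h2, Matrix.fromRows_mulVec] at h1
    simpa using h1.symm
  -- Key lemma
  have key : ∀ (u w v : Fin (p + q) → ℝ),
      F.mulVec u = G.mulVec w + v ↔
      ((Q⁻¹.mulVec u ∘ e ∘ Sum.inl = J.mulVec (Q⁻¹.mulVec w ∘ e ∘ Sum.inl) + P₁.mulVec v) ∧
       (H.mulVec (Q⁻¹.mulVec u ∘ e ∘ Sum.inr) = Q⁻¹.mulVec w ∘ e ∘ Sum.inr + P₂.mulVec v)) := by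
    intro u w v
    have step1 : F.mulVec u = G.mulVec w + v ↔
        P.mulVec (F.mulVec u) = P.mulVec (G.mulVec w + v) := by
      constructor
      · intro h; rw [h]
      · intro h
        calc F.mulVec u = (P⁻¹ * P).mulVec (F.mulVec u) := by rw [hPiP, Matrix.one_mulVec]
          _ = P⁻¹.mulVec (P.mulVec (F.mulVec u)) := (Matrix.mulVec_mulVec _ P⁻¹ P).symm
          _ = P⁻¹.mulVec (P.mulVec (G.mulVec w + v)) := by rw [h]
          _ = (P⁻¹ * P).mulVec (G.mulVec w + v) := Matrix.mulVec_mulVec _ P⁻¹ P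
          _ = G.mulVec w + v := by rw [hPiP, Matrix.one_mulVec]
    have lhs : P.mulVec (F.mulVec u) = (P * F * Q).mulVec (Q⁻¹.mulVec u) := by
      rw [Matrix.mulVec_mulVec, Matrix.mulVec_mulVec, Matrix.mul_assoc (P * F) Q Q⁻¹,
        hQQi, Matrix.mul_one]
    have rhs : P.mulVec (G.mulVec w + v) = (P * G * Q).mulVec (Q⁻¹.mulVec w) + P.mulVec v := by
      rw [Matrix.mulVec_add, Matrix.mulVec_mulVec, Matrix.mulVec_mulVec,
        Matrix.mul_assoc (P * G) Q Q⁻¹, hQQi, Matrix.mul_one]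
    rw [step1, lhs, rhs, hF, hG]
    rw [Matrix.submatrix_mulVec_equiv, Matrix.submatrix_mulVec_equiv]
    simp only [Equiv.symm_symm]
    have comp_iff : ∀ (f g : Fin p ⊕ Fin q → ℝ) (h : Fin (p + q) → ℝ),
        f ∘ e.symm = g ∘ e.symm + h ↔ f = g + h ∘ e := by
      intro f g h
      constructor
      · intro hh
        funext i
        have := congrFun hh (e i)
        simpa using this
      · intro hh
        funext i
        have := congrFun hh (e.symm i)
        simpa using this
    rw [comp_iff, rowB v, Matrix.fromBlocks_mulVec, Matrix.fromBlocks_mulVec]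
    constructor
    · intro hh
      constructor
      · funext i
        have := congrFun hh (Sum.inl i)
        simpa [Function.comp_assoc] using this
      · funext i
        have := congrFun hh (Sum.inr i)
        simpa [Function.comp_assoc] using this
    · rintro ⟨h1, h2⟩
      funext i
      cases i with
      | inl i => simpa [Function.comp_assoc] using congrFun h1 i
      | inr i => simpa [Function.comp_assoc] using congrFun h2 i
  constructor
  · intro hFG
    refine ⟨fun k => Q⁻¹.mulVec (Y k) ∘ e ∘ Sum.inl, fun k => Q⁻¹.mulVec (Y k) ∘ e ∘ Sum.inr,
      ?_, ?_, ?_⟩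
    · intro k
      rw [colA]
      have : Sum.elim (Q⁻¹.mulVec (Y k) ∘ e ∘ Sum.inl) (Q⁻¹.mulVec (Y k) ∘ e ∘ Sum.inr) ∘ e.symm
          = Q⁻¹.mulVec (Y k) := by
        funext i
        obtain ⟨s, rfl⟩ := e.surjective i
        cases s <;> simp
      rw [this, Matrix.mulVec_mulVec, hQQi, Matrix.one_mulVec]
    · intro k
      exact ((key _ _ _).mp (hFG k)).1
    · intro k
      exact ((key _ _ _).mp (hFG k)).2
  · rintro ⟨y, z, hY, hy, hz⟩
    intro k
    have hx : ∀ j, Q⁻¹.mulVec (Y j) = Sum.elim (y j) (z j) ∘ e.symm := by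
      intro j
      rw [hY j, colA, Matrix.mulVec_mulVec, hQiQ, Matrix.one_mulVec]
    have red1 : ∀ (a : Fin p → ℝ) (b : Fin q → ℝ),
        ((Sum.elim a b ∘ e.symm) ∘ (e ∘ Sum.inl)) = a := by
      intro a b; funext i; simp
    have red2 : ∀ (a : Fin p → ℝ) (b : Fin q → ℝ),
        ((Sum.elim a b ∘ e.symm) ∘ (e ∘ Sum.inr)) = b := by
      intro a b; funext i; simp
    rw [key]
    constructor
    · rw [hx (k + 1), hx k]
      show ((Sum.elim _ _ ∘ e.symm) ∘ (e ∘ Sum.inl)) = J.mulVec ((Sum.elim _ _ ∘ e.symm) ∘ (e ∘ Sum.inl)) + _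
      rw [red1, red1]
      exact hy k
    · rw [hx (k + 1), hx k]
      show H.mulVec ((Sum.elim _ _ ∘ e.symm) ∘ (e ∘ Sum.inr)) = ((Sum.elim _ _ ∘ e.symm) ∘ (e ∘ Sum.inr)) + _
      rw [red2, red2]
      exact hz k
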